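/- Let X ⊆ ℝ^d be compact with H^{d-1}(∂X) < ∞, ρ a PSF, β ∈ (0,1). Then the thresholded volume tensor estimator is asymptotically unbiased: for every r ≥ 0 and every tuple of vectors, lim_{a→0} (1/r!) ∫_{ℝ^d} z^r 𝟙_{{θ_a^X(z) ≥ β}} dz = (1/r!) ∫_X z^r dz, where z^r denotes the r-fold symmetric tensor power (equivalently, the limit holds for each polynomial coordinate z ↦ ∏_{k=1}^r ⟨z, v_{i_k}⟩). -/

import Mathlib

open MeasureTheory Metric RealInnerProductSpace


private lemma frontier_vol_zero {d : ℕ} (X : Set (EuclideanSpace ℝ (Fin d)))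
    (hXb : μH[(d : ℝ) - 1] (frontier X) < ⊤) :
    volume (frontier X) = 0 := by
  rcases Nat.eq_zero_or_pos d with rfl | hd
  · have hfr : frontier X = ∅ := by
      rcases X.eq_empty_or_nonempty with rfl | ⟨x, hx⟩
      · simp
      · have : X = Set.univ := Set.eq_univ_of_forall fun y => (Subsingleton.elim y x) ▸ hx
        simp [this]
    simp [hfr]
  · have h1 : μH[(d : ℝ)] (frontier X) = 0 :=
      (Measure.hausdorffMeasure_zero_or_top (by linarith : (d : ℝ) - 1 < (d : ℝ))
        (frontier X)).resolve_right hXb.ne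
    set e := (MeasurableEquiv.toLp 2 (Fin d → ℝ)).symm
    have hL : LipschitzWith 1 (⇑(WithLp.equiv 2 (Fin d → ℝ))) := PiLp.lipschitzWith_ofLp 2 _
    have h2 : μH[(d : ℝ)] ((WithLp.equiv 2 (Fin d → ℝ)) '' frontier X) = 0 := by
      refine le_antisymm ?_ zero_le
      calc μH[(d : ℝ)] ((WithLp.equiv 2 (Fin d → ℝ)) '' frontier X)
          ≤ (1 : NNReal) ^ (d : ℝ) * μH[(d : ℝ)] (frontier X) :=
            hL.hausdorffMeasure_image_le (by positivity) _
        _ = 0 := by rw [h1]; simp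
    have h3 : volume ((WithLp.equiv 2 (Fin d → ℝ)) '' frontier X) = 0 := by
      rw [← hausdorffMeasure_pi_real (ι := Fin d)]
      simpa [Fintype.card_fin] using h2
    have hms : MeasurableSet ((WithLp.equiv 2 (Fin d → ℝ)) '' frontier X) := by
      rw [show ((WithLp.equiv 2 (Fin d → ℝ)) '' frontier X) = ⇑e '' frontier X by
        rfl]
      rw [MeasurableEquiv.image_eq_preimage_symm]
      exact e.symm.measurable isClosed_frontier.measurableSet
    have h4 := (EuclideanSpace.volume_preserving_symm_measurableEquiv_toLp (Fin d)).measure_preimage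
      hms.nullMeasurableSet
    rw [h3] at h4
    rw [← h4]
    congr 1
    rw [show ((WithLp.equiv 2 (Fin d → ℝ)) '' frontier X) = ⇑e '' frontier X by
      rfl]
    exact (Set.preimage_image_eq _ e.injective).symm


private lemma theta_repr {d : ℕ} (ρ : EuclideanSpace ℝ (Fin d) → ℝ)
    (X : Set (EuclideanSpace ℝ (Fin d))) (hXm : MeasurableSet X)
    {a : ℝ} (ha : 0 < a) (y : EuclideanSpace ℝ (Fin d)) :
    (a ^ d)⁻¹ * ∫ w in X, ρ (a⁻¹ • (w - y)) =
      ∫ u, X.indicator (fun _ => (1 : ℝ)) (y + a • u) * ρ u := by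
  set f : EuclideanSpace ℝ (Fin d) → ℝ :=
    fun w => X.indicator (fun _ => (1 : ℝ)) w * ρ (a⁻¹ • (w - y)) with hf
  have h1 : ∫ w in X, ρ (a⁻¹ • (w - y)) = ∫ w, f w := by
    rw [← integral_indicator hXm]
    congr 1; ext w
    by_cases hw : w ∈ X <;> simp [hf, Set.indicator_apply, hw]
  have h2 : ∫ u, f (y + a • u) = |(a ^ d)⁻¹| • ∫ w, f (y + w) := by
    have := Measure.integral_comp_smul (volume : Measure (EuclideanSpace ℝ (Fin d)))
      (fun w => f (y + w)) a
    simpa [finrank_euclideanSpace_fin] using this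
  have h3 : ∫ w, f (y + w) = ∫ w, f w := integral_add_left_eq_self f y
  have h4 : ∀ u, f (y + a • u) = X.indicator (fun _ => (1 : ℝ)) (y + a • u) * ρ u := by
    intro u
    have : a⁻¹ • (y + a • u - y) = u := by
      rw [add_sub_cancel_left, smul_smul, inv_mul_cancel₀ ha.ne', one_smul]
    show X.indicator (fun _ => (1 : ℝ)) (y + a • u) * ρ (a⁻¹ • (y + a • u - y)) = _
    rw [this]
  rw [h1, ← h3, ← smul_eq_mul, ← abs_of_pos (show (0:ℝ) < (a ^ d)⁻¹ by positivity), ← h2]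
  exact integral_congr_ae (Filter.Eventually.of_forall h4)

private lemma theta_meas {d : ℕ} (ρ : EuclideanSpace ℝ (Fin d) → ℝ) (hρm : Measurable ρ)
    (X : Set (EuclideanSpace ℝ (Fin d))) (hXm : MeasurableSet X) (a : ℝ) :
    Measurable (fun y : EuclideanSpace ℝ (Fin d) => ∫ w in X, ρ (a⁻¹ • (w - y))) := by
  have hsm : StronglyMeasurable
      (fun q : EuclideanSpace ℝ (Fin d) × EuclideanSpace ℝ (Fin d) =>
        X.indicator (fun _ => (1 : ℝ)) q.2 * ρ (a⁻¹ • (q.2 - q.1))) := by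
    apply Measurable.stronglyMeasurable
    exact ((measurable_const.indicator hXm).comp measurable_snd).mul
      (hρm.comp ((measurable_snd.sub measurable_fst).const_smul a⁻¹))
  have := hsm.integral_prod_right' (ν := volume)
  have heq : (fun y : EuclideanSpace ℝ (Fin d) => ∫ w in X, ρ (a⁻¹ • (w - y))) =
      fun y => ∫ w, X.indicator (fun _ => (1 : ℝ)) w * ρ (a⁻¹ • (w - y)) := by
    ext y
    rw [← integral_indicator hXm]
    congr 1; ext w
    by_cases hw : w ∈ X <;> simp [Set.indicator_apply, hw]
  rw [heq]
  exact this.measurable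


private lemma tail_tendsto {d : ℕ} (ρ : EuclideanSpace ℝ (Fin d) → ℝ) (hρm : Measurable ρ)
    (hρ0 : ∀ z, 0 ≤ ρ z) (hρint : Integrable ρ) :
    Filter.Tendsto
      (fun a : ℝ => ∫ u, Set.indicator {u : EuclideanSpace ℝ (Fin d) | 1 ≤ a * ‖u‖} ρ u)
      (nhdsWithin 0 (Set.Ioi 0)) (nhds 0) := by
  have main := tendsto_integral_filter_of_dominated_convergence
      (μ := (volume : Measure (EuclideanSpace ℝ (Fin d))))
      (l := nhdsWithin (0:ℝ) (Set.Ioi 0))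
      (F := fun a u => Set.indicator {u : EuclideanSpace ℝ (Fin d) | 1 ≤ a * ‖u‖} ρ u)
      (f := fun _ => (0:ℝ)) ρ
      (Filter.Eventually.of_forall fun a =>
        (hρm.indicator (measurableSet_le measurable_const
          (measurable_norm.const_mul a))).aestronglyMeasurable)
      (Filter.Eventually.of_forall fun a => Filter.Eventually.of_forall fun u => by
        rw [Real.norm_eq_abs, abs_of_nonneg (Set.indicator_nonneg (fun x _ => hρ0 x) u)]
        exact Set.indicator_le_self' (fun x _ => hρ0 x) u)
      hρint
      (Filter.Eventually.of_forall fun u => by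
        have hmem : Set.Ioo (0:ℝ) (1 / (‖u‖ + 1)) ∈ nhdsWithin 0 (Set.Ioi 0) :=
          Ioo_mem_nhdsGT_of_mem ⟨le_rfl, by positivity⟩
        have hz : ∀ᶠ a in nhdsWithin (0:ℝ) (Set.Ioi 0),
            Set.indicator {u : EuclideanSpace ℝ (Fin d) | 1 ≤ a * ‖u‖} ρ u = 0 := by
          filter_upwards [hmem] with a ha
          apply Set.indicator_of_notMem
          intro h
          have h3 : (0:ℝ) < ‖u‖ + 1 := by positivity
          have h2 : a * (‖u‖ + 1) < 1 := (lt_div_iff₀ h3).mp ha.2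
          have h1 : a * ‖u‖ ≤ a * (‖u‖ + 1) := by nlinarith [ha.1.le]
          simp only [Set.mem_setOf_eq] at h
          linarith
        exact Filter.Tendsto.congr' (hz.mono fun a h => h.symm) tendsto_const_nhds)
  simpa using main

/-- Asymptotic unbiasedness of the thresholded volume tensor estimator: each polynomial
coordinate of the rank-r volume tensor is recovered in the limit a → 0. -/
theorem volume_tensor_estimator_unbiased (d : ℕ) (ρ : EuclideanSpace ℝ (Fin d) → ℝ)
    (hρm : Measurable ρ) (hρ0 : ∀ z, 0 ≤ ρ z) (hρ1 : ∫ z, ρ z = 1)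
    (X : Set (EuclideanSpace ℝ (Fin d))) (hXc : IsCompact X)
    (hXb : μH[(d : ℝ) - 1] (frontier X) < ⊤)
    (β : ℝ) (hβ : β ∈ Set.Ioo (0 : ℝ) 1)
    (r : ℕ) (v : Fin r → EuclideanSpace ℝ (Fin d)) :
    Filter.Tendsto
      (fun a : ℝ =>
        (r.factorial : ℝ)⁻¹ *
          ∫ z, (∏ k : Fin r, ⟪z, v k⟫) *
            Set.indicator {y | β ≤ (a ^ d)⁻¹ * ∫ w in X, ρ (a⁻¹ • (w - y))}
              (fun _ => (1 : ℝ)) z)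
      (nhdsWithin 0 (Set.Ioi 0))
      (nhds ((r.factorial : ℝ)⁻¹ * ∫ z in X, ∏ k : Fin r, ⟪z, v k⟫)) := by
  classical
  have hXm : MeasurableSet X := hXc.isClosed.measurableSet
  have hρint : Integrable ρ := by
    by_contra h
    rw [integral_undef h] at hρ1; norm_num at hρ1
  have hfr : ∀ᵐ z : EuclideanSpace ℝ (Fin d), z ∉ frontier X :=
    measure_eq_zero_iff_ae_notMem.mp (frontier_vol_zero X hXb)
  have hpc : Continuous (fun z : EuclideanSpace ℝ (Fin d) => ∏ k : Fin r, ⟪z, v k⟫) := by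
    apply continuous_finset_prod
    intro k _
    exact continuous_id.inner continuous_const
  obtain ⟨M, hM⟩ := hXc.isBounded.subset_closedBall 0
  set M' : ℝ := max M 0 with hM'
  have hXM : X ⊆ closedBall 0 M' := hM.trans (closedBall_subset_closedBall (le_max_left _ _))
  have hM'0 : 0 ≤ M' := le_max_right _ _
  have hEmeas : ∀ a : ℝ, MeasurableSet
      {y : EuclideanSpace ℝ (Fin d) | β ≤ (a ^ d)⁻¹ * ∫ w in X, ρ (a⁻¹ • (w - y))} :=
    fun a => measurableSet_le measurable_const ((theta_meas ρ hρm X hXm a).const_mul _)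
  have hev : ∀ᶠ a in nhdsWithin (0:ℝ) (Set.Ioi 0),
      (∫ u, Set.indicator {u : EuclideanSpace ℝ (Fin d) | 1 ≤ a * ‖u‖} ρ u) < β :=
    (tail_tendsto ρ hρm hρ0 hρint).eventually_lt_const hβ.1
  -- key bound outside a big ball
  have hkey : ∀ a : ℝ, 0 < a → ∀ y : EuclideanSpace ℝ (Fin d), M' + 1 ≤ ‖y‖ →
      (a ^ d)⁻¹ * ∫ w in X, ρ (a⁻¹ • (w - y)) ≤
        ∫ u, Set.indicator {u : EuclideanSpace ℝ (Fin d) | 1 ≤ a * ‖u‖} ρ u := by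
    intro a ha y hy
    rw [theta_repr ρ X hXm ha y]
    apply integral_mono_of_nonneg
    · exact Filter.Eventually.of_forall fun u =>
        mul_nonneg (Set.indicator_nonneg (fun _ _ => zero_le_one) _) (hρ0 u)
    · exact hρint.indicator (measurableSet_le measurable_const (measurable_norm.const_mul a))
    · apply Filter.Eventually.of_forall
      intro u
      dsimp only
      by_cases hu : y + a • u ∈ X
      · have h1 : ‖y + a • u‖ ≤ M' := mem_closedBall_zero_iff.mp (hXM hu)
        have hnorm : ‖a • u‖ = a * ‖u‖ := by
          rw [norm_smul, Real.norm_eq_abs, abs_of_pos ha]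
        have h3 : ‖y‖ - ‖y + a • u‖ ≤ ‖a • u‖ := by
          have := norm_sub_norm_le y (y + a • u)
          have h4 : y - (y + a • u) = -(a • u) := by abel
          rw [h4, norm_neg] at this
          exact this
        have h2 : (1:ℝ) ≤ a * ‖u‖ := by rw [← hnorm]; linarith
        have h2' : u ∈ {u : EuclideanSpace ℝ (Fin d) | 1 ≤ a * ‖u‖} := h2
        rw [Set.indicator_of_mem hu, Set.indicator_of_mem h2', one_mul]
      · rw [Set.indicator_of_notMem hu, zero_mul]
        exact Set.indicator_nonneg (fun x _ => hρ0 x) u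
  -- pointwise convergence of theta
  have hconv1 : ∀ z ∈ interior X,
      Filter.Tendsto (fun a : ℝ => (a ^ d)⁻¹ * ∫ w in X, ρ (a⁻¹ • (w - z)))
        (nhdsWithin 0 (Set.Ioi 0)) (nhds 1) := by
    intro z hz
    obtain ⟨δ, hδ0, hδ⟩ := Metric.isOpen_iff.mp isOpen_interior z hz
    have key : Filter.Tendsto
        (fun a : ℝ => ∫ u, X.indicator (fun _ => (1:ℝ)) (z + a • u) * ρ u)
        (nhdsWithin 0 (Set.Ioi 0)) (nhds (∫ u, ρ u)) := by
      apply tendsto_integral_filter_of_dominated_convergence ρ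
      · refine Filter.Eventually.of_forall fun a => Measurable.aestronglyMeasurable ?_
        exact (((measurable_const.indicator hXm).comp
          ((measurable_id.const_smul a).const_add z))).mul hρm
      · refine Filter.Eventually.of_forall fun a => Filter.Eventually.of_forall fun u => ?_
        rw [Real.norm_eq_abs, abs_of_nonneg
          (mul_nonneg (Set.indicator_nonneg (fun _ _ => zero_le_one) _) (hρ0 u))]
        by_cases hu : z + a • u ∈ X
        · rw [Set.indicator_of_mem hu, one_mul]
        · rw [Set.indicator_of_notMem hu, zero_mul]; exact hρ0 u
      · exact hρint
      · refine Filter.Eventually.of_forall fun u => ?_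
        have hmem : Set.Ioo (0:ℝ) (δ / (‖u‖ + 1)) ∈ nhdsWithin (0:ℝ) (Set.Ioi 0) :=
          Ioo_mem_nhdsGT_of_mem ⟨le_rfl, by positivity⟩
        have hz' : ∀ᶠ a in nhdsWithin (0:ℝ) (Set.Ioi 0),
            X.indicator (fun _ => (1:ℝ)) (z + a • u) * ρ u = ρ u := by
          filter_upwards [hmem] with a ha
          have h3 : (0:ℝ) < ‖u‖ + 1 := by positivity
          have hin : z + a • u ∈ X := by
            apply interior_subset (hδ _)
            rw [mem_ball, dist_eq_norm]
            have h4 : z + a • u - z = a • u := by abel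
            rw [h4, norm_smul, Real.norm_eq_abs, abs_of_pos ha.1]
            calc a * ‖u‖ ≤ a * (‖u‖ + 1) := by nlinarith [ha.1.le]
              _ < δ := by
                  have := (lt_div_iff₀ h3).mp ha.2
                  linarith
          rw [Set.indicator_of_mem hin, one_mul]
        exact Filter.Tendsto.congr' (hz'.mono fun a h => h.symm) tendsto_const_nhds
    rw [hρ1] at key
    refine key.congr' ?_
    filter_upwards [self_mem_nhdsWithin] with a ha
    exact (theta_repr ρ X hXm ha z).symm
  have hconv0 : ∀ z ∉ X,
      Filter.Tendsto (fun a : ℝ => (a ^ d)⁻¹ * ∫ w in X, ρ (a⁻¹ • (w - z)))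
        (nhdsWithin 0 (Set.Ioi 0)) (nhds 0) := by
    intro z hz
    obtain ⟨δ, hδ0, hδ⟩ := Metric.isOpen_iff.mp hXc.isClosed.isOpen_compl z hz
    have key : Filter.Tendsto
        (fun a : ℝ => ∫ u, X.indicator (fun _ => (1:ℝ)) (z + a • u) * ρ u)
        (nhdsWithin 0 (Set.Ioi 0)) (nhds 0) := by
      have main := tendsto_integral_filter_of_dominated_convergence
        (μ := (volume : Measure (EuclideanSpace ℝ (Fin d))))
        (l := nhdsWithin (0:ℝ) (Set.Ioi 0))
        (F := fun (a : ℝ) u => X.indicator (fun _ => (1:ℝ)) (z + a • u) * ρ u)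
        (f := fun _ => (0:ℝ)) ρ
        (Filter.Eventually.of_forall fun a => Measurable.aestronglyMeasurable
          ((((measurable_const.indicator hXm).comp
            ((measurable_id.const_smul a).const_add z))).mul hρm))
        (Filter.Eventually.of_forall fun a => Filter.Eventually.of_forall fun u => by
          rw [Real.norm_eq_abs, abs_of_nonneg
            (mul_nonneg (Set.indicator_nonneg (fun _ _ => zero_le_one) _) (hρ0 u))]
          by_cases hu : z + a • u ∈ X
          · rw [Set.indicator_of_mem hu, one_mul]
          · rw [Set.indicator_of_notMem hu, zero_mul]; exact hρ0 u)
        hρint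
        (Filter.Eventually.of_forall fun u => by
          have hmem : Set.Ioo (0:ℝ) (δ / (‖u‖ + 1)) ∈ nhdsWithin (0:ℝ) (Set.Ioi 0) :=
            Ioo_mem_nhdsGT_of_mem ⟨le_rfl, by positivity⟩
          have hz' : ∀ᶠ a in nhdsWithin (0:ℝ) (Set.Ioi 0),
              X.indicator (fun _ => (1:ℝ)) (z + a • u) * ρ u = 0 := by
            filter_upwards [hmem] with a ha
            have h3 : (0:ℝ) < ‖u‖ + 1 := by positivity
            have hin : z + a • u ∈ Xᶜ := by
              apply hδ
              rw [mem_ball, dist_eq_norm]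
              have h4 : z + a • u - z = a • u := by abel
              rw [h4, norm_smul, Real.norm_eq_abs, abs_of_pos ha.1]
              calc a * ‖u‖ ≤ a * (‖u‖ + 1) := by nlinarith [ha.1.le]
                _ < δ := by
                    have := (lt_div_iff₀ h3).mp ha.2
                    linarith
            rw [Set.indicator_of_notMem hin, zero_mul]
          exact Filter.Tendsto.congr' (hz'.mono fun a h => h.symm) tendsto_const_nhds)
      simpa using main
    refine key.congr' ?_
    filter_upwards [self_mem_nhdsWithin] with a ha
    exact (theta_repr ρ X hXm ha z).symm
  -- main dominated convergence
  apply Filter.Tendsto.const_mul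
  rw [← integral_indicator hXm]
  apply tendsto_integral_filter_of_dominated_convergence
    ((closedBall (0 : EuclideanSpace ℝ (Fin d)) (M' + 1)).indicator
      (fun z => ‖∏ k : Fin r, ⟪z, v k⟫‖))
  · refine Filter.Eventually.of_forall fun a => ?_
    exact hpc.aestronglyMeasurable.mul
      ((measurable_const.indicator (hEmeas a)).aestronglyMeasurable)
  · filter_upwards [hev, self_mem_nhdsWithin] with a hTa ha
    refine Filter.Eventually.of_forall fun z => ?_
    by_cases hzE : z ∈ {y : EuclideanSpace ℝ (Fin d) |
        β ≤ (a ^ d)⁻¹ * ∫ w in X, ρ (a⁻¹ • (w - y))}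
    · have hz : ‖z‖ < M' + 1 := by
        by_contra h
        push_neg at h
        have := hkey a ha z h
        have hβz : β ≤ (a ^ d)⁻¹ * ∫ w in X, ρ (a⁻¹ • (w - z)) := hzE
        linarith
      rw [Set.indicator_of_mem hzE, mul_one,
        Set.indicator_of_mem (mem_closedBall_zero_iff.mpr hz.le)]
    · rw [Set.indicator_of_notMem hzE, mul_zero, norm_zero]
      exact Set.indicator_nonneg (fun x _ => norm_nonneg _) z
  · exact ((hpc.norm.continuousOn).integrableOn_compact
      (isCompact_closedBall _ _)).integrable_indicator measurableSet_closedBall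
  · filter_upwards [hfr] with z hz
    by_cases hzX : z ∈ X
    · have hzi : z ∈ interior X := by
        by_contra h
        exact hz ⟨subset_closure hzX, h⟩
      have hlt := (hconv1 z hzi).eventually_const_lt hβ.2
      have heq : ∀ᶠ a in nhdsWithin (0:ℝ) (Set.Ioi 0),
          (∏ k : Fin r, ⟪z, v k⟫) *
            Set.indicator {y : EuclideanSpace ℝ (Fin d) |
              β ≤ (a ^ d)⁻¹ * ∫ w in X, ρ (a⁻¹ • (w - y))} (fun _ => (1:ℝ)) z =
            ∏ k : Fin r, ⟪z, v k⟫ := by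
        filter_upwards [hlt] with a hac
        have hzmem : z ∈ {y : EuclideanSpace ℝ (Fin d) |
            β ≤ (a ^ d)⁻¹ * ∫ w in X, ρ (a⁻¹ • (w - y))} := hac.le
        rw [Set.indicator_of_mem hzmem, mul_one]
      rw [Set.indicator_of_mem hzX]
      exact Filter.Tendsto.congr' (heq.mono fun a h => h.symm) tendsto_const_nhds
    · have hlt := (hconv0 z hzX).eventually_lt_const hβ.1
      have heq : ∀ᶠ a in nhdsWithin (0:ℝ) (Set.Ioi 0),
          (∏ k : Fin r, ⟪z, v k⟫) *
            Set.indicator {y : EuclideanSpace ℝ (Fin d) |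
              β ≤ (a ^ d)⁻¹ * ∫ w in X, ρ (a⁻¹ • (w - y))} (fun _ => (1:ℝ)) z =
            0 := by
        filter_upwards [hlt] with a hac
        have hzmem : z ∉ {y : EuclideanSpace ℝ (Fin d) |
            β ≤ (a ^ d)⁻¹ * ∫ w in X, ρ (a⁻¹ • (w - y))} := not_le.mpr hac
        rw [Set.indicator_of_notMem hzmem, mul_zero]
      rw [Set.indicator_of_notMem hzX]
      exact Filter.Tendsto.congr' (heq.mono fun a h => h.symm) tendsto_const_nhds
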